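/- Let 𝔅 be a Boolean algebra and D a filter on 𝔅. Then every T_ord-(ℵ₀,ℵ₀)-moral problem in (𝔅,D) has a solution. -/

import Mathlib

open FirstOrder Cardinal

namespace Shelah1064

/-- `Dset` is a filter on the lattice `B` (with top). -/
def IsBFilter {B : Type*} [Lattice B] [OrderTop B] (Dset : Set B) : Prop :=
  ⊤ ∈ Dset ∧ (∀ x ∈ Dset, ∀ y ∈ Dset, x ⊓ y ∈ Dset) ∧
    ∀ x ∈ Dset, ∀ y : B, x ≤ y → y ∈ Dset

/-! ### `T_ord`-moral problems -/

/-- The linear order `I(κ₁,κ₂) = I₁ + I₂`: a copy of `κ₁` followed by a reversed copy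
of `κ₂`. -/
abbrev IOrd (κ₁ κ₂ : Cardinal) : Type _ := κ₁.ord.ToType ⊕ₗ (κ₂.ord.ToType)ᵒᵈ

/-- `a` is a `T_ord`-`(κ₁,κ₂)`-moral problem in `(B, D)`; `a` is given on all pairs, with the
stipulations `a s s = ⊤` and symmetry built in. -/
def TordProblem {B : Type*} [BooleanAlgebra B] (Dset : Set B) (κ₁ κ₂ : Cardinal)
    (a : IOrd κ₁ κ₂ → IOrd κ₁ κ₂ → B) : Prop :=
  (∀ s, a s s = ⊤) ∧ (∀ s t, a s t = a t s) ∧ (∀ s t, s < t → a s t ∈ Dset) ∧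
  ∀ (u : Finset (IOrd κ₁ κ₂)) (tt : IOrd κ₁ κ₂ → IOrd κ₁ κ₂ → Bool),
    (u ×ˢ u).inf (fun q => if tt q.1 q.2 then a q.1 q.2 else (a q.1 q.2)ᶜ) ≠ ⊥ →
    ∃ f : IOrd κ₁ κ₂ → ℕ, (∀ s ∈ u, f s < u.card) ∧
      ∀ s ∈ u, ∀ t ∈ u, (tt s t = true ↔ f s ≤ f t)

/-- `b` is a solution of the `T_ord`-moral problem `a` in `(B, D)`. -/
def TordSolution {B : Type*} [BooleanAlgebra B] (Dset : Set B) {κ₁ κ₂ : Cardinal}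
    (a : IOrd κ₁ κ₂ → IOrd κ₁ κ₂ → B) (b : IOrd κ₁ κ₂ → B) : Prop :=
  (∀ s, b s ∈ Dset) ∧
  ∀ (i : κ₁.ord.ToType) (j : (κ₂.ord.ToType)ᵒᵈ),
    b (toLex (Sum.inl i)) ⊓ b (toLex (Sum.inr j)) ≤
      a (toLex (Sum.inl i)) (toLex (Sum.inr j))

universe u in
/-- An enumeration of the order type of `ω` (at any universe). -/
noncomputable def enumOmega : (Cardinal.ord (ℵ₀ : Cardinal.{u})).ToType ≃ ℕ := by
  have hmk : #((Cardinal.ord (ℵ₀ : Cardinal.{u})).ToType) = ℵ₀ := Cardinal.mk_ord_toType _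
  haveI : Countable ((Cardinal.ord (ℵ₀ : Cardinal.{u})).ToType) :=
    Cardinal.mk_le_aleph0_iff.mp hmk.le
  haveI : Infinite ((Cardinal.ord (ℵ₀ : Cardinal.{u})).ToType) :=
    Cardinal.infinite_iff.mpr hmk.ge
  exact Classical.choice nonempty_equiv_of_countable

/-- The diagonal construction: given enumerations of `α` and `β` and a doubly-indexed
family of filter members, produce pointwise filter members dominating each pair. -/
theorem diag_aux {B : Type*} [BooleanAlgebra B] {Dset : Set B}
    (hTop : (⊤ : B) ∈ Dset) (hInf : ∀ x ∈ Dset, ∀ y ∈ Dset, x ⊓ y ∈ Dset)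
    {α β : Type*} (e₁ : α ≃ ℕ) (e₂ : β ≃ ℕ) (c : α → β → B)
    (hc : ∀ i j, c i j ∈ Dset) :
    ∃ (f : α → B) (g : β → B), (∀ i, f i ∈ Dset) ∧ (∀ j, g j ∈ Dset) ∧
      ∀ i j, f i ⊓ g j ≤ c i j := by
  have infMem : ∀ (u : Finset ℕ) (h : ℕ → B), (∀ n ∈ u, h n ∈ Dset) → u.inf h ∈ Dset := by
    intro u
    induction u using Finset.induction_on with
    | empty => intro h _; simpa using hTop
    | insert _ _ hx ih =>
        intro h hh
        rw [Finset.inf_insert]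
        exact hInf _ (hh _ (Finset.mem_insert_self _ _)) _
          (ih h fun n hn => hh n (Finset.mem_insert_of_mem hn))
  refine ⟨fun i => (Finset.range (e₁ i + 1)).inf fun m => c i (e₂.symm m),
    fun j => (Finset.range (e₂ j + 1)).inf fun n => c (e₁.symm n) j, ?_, ?_, ?_⟩
  · exact fun i => infMem _ _ fun m _ => hc _ _
  · exact fun j => infMem _ _ fun n _ => hc _ _
  · intro i j
    rcases le_total (e₂ j) (e₁ i) with h | h
    · refine le_trans inf_le_left ?_
      have := Finset.inf_le (f := fun m => c i (e₂.symm m))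
        (Finset.mem_range.mpr (Nat.lt_succ_of_le h))
      simpa using this
    · refine le_trans inf_le_right ?_
      have := Finset.inf_le (f := fun n => c (e₁.symm n) j)
        (Finset.mem_range.mpr (Nat.lt_succ_of_le h))
      simpa using this

/-- For any Boolean algebra `𝔅` and any filter `D` on `𝔅`, every
`T_ord`-`(ℵ₀,ℵ₀)`-moral problem in `(𝔅,D)` has a solution. -/
theorem tordProblem_aleph0_aleph0_solvable {B : Type*} [BooleanAlgebra B] (Dset : Set B)
    (hD : IsBFilter Dset) (a : IOrd ℵ₀ ℵ₀ → IOrd ℵ₀ ℵ₀ → B)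
    (ha : TordProblem Dset ℵ₀ ℵ₀ a) : ∃ b, TordSolution Dset a b := by
  obtain ⟨hTop, hInf, hUp⟩ := hD
  obtain ⟨-, -, haD, -⟩ := ha
  have hc : ∀ i j, a (toLex (Sum.inl i)) (toLex (Sum.inr j)) ∈ Dset :=
    fun i j => haD _ _ (Sum.Lex.inl_lt_inr _ _)
  obtain ⟨f, g, hf, hg, hfg⟩ := diag_aux hTop hInf enumOmega
    (OrderDual.ofDual.trans enumOmega) _ hc
  refine ⟨fun s => Sum.rec f g (ofLex s), ?_, ?_⟩
  · intro s
    rcases s with i | j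
    · exact hf i
    · exact hg j
  · exact hfg

end Shelah1064
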